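/- Let ψ : ℝ³ → ℝ satisfy ψ(Z(θ)·v) = ψ(v) for all θ ∈ ℝ and v ∈ ℝ³ (ψ is constant on the left coset of z-axis rotations). Let x₁, …, x_N ∈ ℝ³ be points, let x_j ≠ 0 with h = ‖x_j‖, and let Q ∈ SO(3). Choose α, β ∈ ℝ with Z(α)·Y(β)·n = x_j/‖x_j‖ and α′, β′ ∈ ℝ with Z(α′)·Y(β′)·n = Q·x_j/‖x_j‖ (note ‖Q·x_j‖ = ‖x_j‖). Then the sparse correlation is point-wise rotation invariant: (1/N)·∑_{i=1}^{N} ψ((Z(α′)·Y(β′)·Z(2πh))⁻¹ · Q·x_i) = (1/N)·∑_{i=1}^{N} ψ((Z(α)·Y(β)·Z(2πh))⁻¹ · x_i), i.e. [ψ ∗ L_Q f](Q·x_j) = [ψ ∗ f](x_j) for the empirical point-cloud distribution f. -/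

import Mathlib

/-- The 3×3 rotation matrix about the z-axis by angle `θ`. -/
noncomputable def Zr (θ : ℝ) : Matrix (Fin 3) (Fin 3) ℝ :=
  !![Real.cos θ, -Real.sin θ, 0; Real.sin θ, Real.cos θ, 0; 0, 0, 1]

/-- The 3×3 rotation matrix about the y-axis by angle `β`. -/
noncomputable def Yr (β : ℝ) : Matrix (Fin 3) (Fin 3) ℝ :=
  !![Real.cos β, 0, Real.sin β; 0, 1, 0; -Real.sin β, 0, Real.cos β]

/-- The North Pole `n = (0,0,1)ᵀ`. -/
def npole : Fin 3 → ℝ := ![0, 0, 1]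

/-- The Euclidean norm of a vector in `ℝ³`. -/
noncomputable def enorm3 (v : Fin 3 → ℝ) : ℝ :=
  Real.sqrt (v 0 ^ 2 + v 1 ^ 2 + v 2 ^ 2)

lemma Zr_mem (θ : ℝ) : Zr θ ∈ Matrix.orthogonalGroup (Fin 3) ℝ := by
  rw [Matrix.mem_orthogonalGroup_iff]
  ext i j
  fin_cases i <;> fin_cases j <;>
    simp [Zr, Matrix.mul_apply, Fin.sum_univ_three, Matrix.star_apply,
      star_trivial, Matrix.one_apply] <;>
    nlinarith [Real.sin_sq_add_cos_sq θ]

lemma Yr_mem (β : ℝ) : Yr β ∈ Matrix.orthogonalGroup (Fin 3) ℝ := by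
  rw [Matrix.mem_orthogonalGroup_iff]
  ext i j
  fin_cases i <;> fin_cases j <;>
    simp [Yr, Matrix.mul_apply, Fin.sum_univ_three, Matrix.star_apply,
      star_trivial, Matrix.one_apply] <;>
    nlinarith [Real.sin_sq_add_cos_sq β]

lemma Zr_det (θ : ℝ) : (Zr θ).det = 1 := by
  rw [Zr, Matrix.det_fin_three]
  simp
  nlinarith [Real.sin_sq_add_cos_sq θ]

lemma Yr_det (β : ℝ) : (Yr β).det = 1 := by
  rw [Yr, Matrix.det_fin_three]
  simp
  nlinarith [Real.sin_sq_add_cos_sq β]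

lemma Zr_mem_so (θ : ℝ) : Zr θ ∈ Matrix.specialOrthogonalGroup (Fin 3) ℝ :=
  Matrix.mem_specialOrthogonalGroup_iff.mpr ⟨Zr_mem θ, Zr_det θ⟩

lemma Yr_mem_so (β : ℝ) : Yr β ∈ Matrix.specialOrthogonalGroup (Fin 3) ℝ :=
  Matrix.mem_specialOrthogonalGroup_iff.mpr ⟨Yr_mem β, Yr_det β⟩

lemma Zr_npole (θ : ℝ) : (Zr θ).mulVec npole = npole := by
  ext i
  fin_cases i <;> simp [Zr, npole, Matrix.mulVec, dotProduct, Fin.sum_univ_three]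

lemma fix_npole_eq_Zr (M : Matrix (Fin 3) (Fin 3) ℝ)
    (hM : M ∈ Matrix.specialOrthogonalGroup (Fin 3) ℝ)
    (hfix : M.mulVec npole = npole) : ∃ θ, M = Zr θ := by
  obtain ⟨hO, hdet⟩ := Matrix.mem_specialOrthogonalGroup_iff.mp hM
  have hMMt : M * star M = 1 := (Matrix.mem_orthogonalGroup_iff _ _).mp hO
  have hMtM : star M * M = 1 := (Matrix.mem_orthogonalGroup_iff' _ _).mp hO
  have hc0 : M 0 2 = 0 := by
    have := congrFun hfix 0
    simpa [Matrix.mulVec, dotProduct, npole, Fin.sum_univ_three] using this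
  have hc1 : M 1 2 = 0 := by
    have := congrFun hfix 1
    simpa [Matrix.mulVec, dotProduct, npole, Fin.sum_univ_three] using this
  have hc2 : M 2 2 = 1 := by
    have := congrFun hfix 2
    simpa [Matrix.mulVec, dotProduct, npole, Fin.sum_univ_three] using this
  have hrow : M 2 0 * M 2 0 + M 2 1 * M 2 1 + M 2 2 * M 2 2 = 1 := by
    have := congrFun (congrFun hMMt 2) 2
    simpa [Matrix.mul_apply, Fin.sum_univ_three, Matrix.star_apply, Matrix.one_apply] using this
  have hr0 : M 2 0 = 0 := by nlinarith [sq_nonneg (M 2 0), sq_nonneg (M 2 1)]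
  have hr1 : M 2 1 = 0 := by nlinarith [sq_nonneg (M 2 0), sq_nonneg (M 2 1)]
  have h00 : M 0 0 * M 0 0 + M 1 0 * M 1 0 + M 2 0 * M 2 0 = 1 := by
    have := congrFun (congrFun hMtM 0) 0
    simpa [Matrix.mul_apply, Fin.sum_univ_three, Matrix.star_apply, Matrix.one_apply] using this
  have h01 : M 0 0 * M 0 1 + M 1 0 * M 1 1 + M 2 0 * M 2 1 = 0 := by
    have := congrFun (congrFun hMtM 0) 1
    simpa [Matrix.mul_apply, Fin.sum_univ_three, Matrix.star_apply, Matrix.one_apply] using this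
  have hdet3 : M 0 0 * M 1 1 - M 0 1 * M 1 0 = 1 := by
    have h := hdet
    rw [Matrix.det_fin_three] at h
    rw [hr0, hr1, hc0, hc1, hc2] at h
    linarith [h]
  set a := M 0 0 with ha_def; set c := M 1 0 with hc_def
  set b := M 0 1 with hb_def; set d := M 1 1 with hd_def
  have ha2 : a * a + c * c = 1 := by rw [hr0] at h00; linarith [h00]
  have h01' : a * b + c * d = 0 := by rw [hr0] at h01; linarith [h01]
  have hd : d = a := by linear_combination a * hdet3 + c * h01' - d * ha2
  have hb : b = -c := by linear_combination a * h01' - c * hdet3 - b * ha2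
  have hz : (Complex.mk a c) ≠ 0 := by
    intro h
    rw [Complex.ext_iff] at h
    simp at h
    nlinarith [ha2, h.1, h.2]
  refine ⟨(Complex.mk a c).arg, ?_⟩
  have habs : ‖Complex.mk a c‖ = 1 := by
    rw [Complex.norm_def, Complex.normSq_mk, ha2]; exact Real.sqrt_one
  have hcos : Real.cos (Complex.mk a c).arg = a := by
    rw [Complex.cos_arg hz, habs]; simp
  have hsin : Real.sin (Complex.mk a c).arg = c := by
    rw [Complex.sin_arg, habs]; simp
  have hA : M 0 0 = Real.cos (Complex.mk a c).arg := hcos.symm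
  have hB : M 0 1 = -Real.sin (Complex.mk a c).arg := by rw [hsin]; exact hb
  have hC : M 1 0 = Real.sin (Complex.mk a c).arg := hsin.symm
  have hD : M 1 1 = Real.cos (Complex.mk a c).arg := by rw [hcos]; exact hd
  ext i j
  fin_cases i <;> fin_cases j <;>
    simp [Zr, hA, hB, hC, hD, hc0, hc1, hc2, hr0, hr1]

/-- **Sparse point-wise rotation invariance of the sparse correlation (SPRIN).**
If `ψ` is constant on the left coset of z-axis rotations, then for any point cloud
`x₁, …, x_N`, any `x_j ≠ 0` with `h = ‖x_j‖`, any `Q ∈ SO(3)`, and spherical angles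
`(α, β)` of `x_j/‖x_j‖` resp. `(α′, β′)` of `Q·x_j/‖x_j‖`, one has
`[ψ ∗ L_Q f](Q·x_j) = [ψ ∗ f](x_j)` for the empirical distribution `f`. -/
theorem sparse_correlation_rotation_invariant
    (ψ : (Fin 3 → ℝ) → ℝ)
    (hψ : ∀ (θ : ℝ) (v : Fin 3 → ℝ), ψ ((Zr θ).mulVec v) = ψ v)
    (N : ℕ) (x : Fin N → Fin 3 → ℝ) (j : Fin N) (hxj : x j ≠ 0)
    (Q : Matrix (Fin 3) (Fin 3) ℝ) (hQ : Q ∈ Matrix.specialOrthogonalGroup (Fin 3) ℝ)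
    (α β α' β' : ℝ)
    (hαβ : (Zr α * Yr β).mulVec npole = (enorm3 (x j))⁻¹ • x j)
    (hαβ' : (Zr α' * Yr β').mulVec npole = (enorm3 (x j))⁻¹ • Q.mulVec (x j)) :
    (1 / (N : ℝ)) *
        ∑ i : Fin N,
          ψ ((Zr α' * Yr β' * Zr (2 * Real.pi * enorm3 (x j)))⁻¹.mulVec (Q.mulVec (x i)))
      = (1 / (N : ℝ)) *
        ∑ i : Fin N,
          ψ ((Zr α * Yr β * Zr (2 * Real.pi * enorm3 (x j)))⁻¹.mulVec (x i)) := by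
  set h : ℝ := 2 * Real.pi * enorm3 (x j) with hh
  set A : Matrix (Fin 3) (Fin 3) ℝ := Zr α * Yr β * Zr h with hA_def
  set A' : Matrix (Fin 3) (Fin 3) ℝ := Zr α' * Yr β' * Zr h with hA'_def
  have hA : A ∈ Matrix.specialOrthogonalGroup (Fin 3) ℝ :=
    mul_mem (mul_mem (Zr_mem_so α) (Yr_mem_so β)) (Zr_mem_so h)
  have hA' : A' ∈ Matrix.specialOrthogonalGroup (Fin 3) ℝ :=
    mul_mem (mul_mem (Zr_mem_so α') (Yr_mem_so β')) (Zr_mem_so h)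
  -- inverses
  have hAdet : IsUnit A.det := by
    rw [(Matrix.mem_specialOrthogonalGroup_iff.mp hA).2]; exact isUnit_one
  have hA'det : IsUnit A'.det := by
    rw [(Matrix.mem_specialOrthogonalGroup_iff.mp hA').2]; exact isUnit_one
  have hAinv : A * A⁻¹ = 1 := Matrix.mul_nonsing_inv A hAdet
  have hA'inv : A'⁻¹ * A' = 1 := Matrix.nonsing_inv_mul A' hA'det
  -- npole images
  have hAn : A.mulVec npole = (enorm3 (x j))⁻¹ • x j := by
    rw [hA_def, ← Matrix.mulVec_mulVec, Zr_npole, hαβ]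
  have hA'n : A'.mulVec npole = (enorm3 (x j))⁻¹ • Q.mulVec (x j) := by
    rw [hA'_def, ← Matrix.mulVec_mulVec, Zr_npole, hαβ']
  -- M := A'⁻¹ * Q * A fixes npole and is in SO(3)
  set M : Matrix (Fin 3) (Fin 3) ℝ := A'⁻¹ * Q * A with hM_def
  have hA'invstar : A'⁻¹ = star A' :=
    Matrix.inv_eq_left_inv ((Matrix.mem_orthogonalGroup_iff' _ _).mp
      (Matrix.mem_specialOrthogonalGroup_iff.mp hA').1)
  have hMso : M ∈ Matrix.specialOrthogonalGroup (Fin 3) ℝ := by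
    rw [Matrix.mem_specialOrthogonalGroup_iff]
    constructor
    · rw [hM_def, hA'invstar]
      exact mul_mem (mul_mem (Unitary.star_mem
        (Matrix.mem_specialOrthogonalGroup_iff.mp hA').1)
        (Matrix.mem_specialOrthogonalGroup_iff.mp hQ).1)
        (Matrix.mem_specialOrthogonalGroup_iff.mp hA).1
    · rw [hM_def, Matrix.det_mul, Matrix.det_mul, Matrix.det_nonsing_inv,
        (Matrix.mem_specialOrthogonalGroup_iff.mp hA').2,
        (Matrix.mem_specialOrthogonalGroup_iff.mp hQ).2,
        (Matrix.mem_specialOrthogonalGroup_iff.mp hA).2]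
      simp
  have hMfix : M.mulVec npole = npole := by
    rw [hM_def, ← Matrix.mulVec_mulVec, ← Matrix.mulVec_mulVec, hAn,
      Matrix.mulVec_smul, ← hA'n, Matrix.mulVec_mulVec, hA'inv, Matrix.one_mulVec]
  obtain ⟨θ, hMθ⟩ := fix_npole_eq_Zr M hMso hMfix
  -- key matrix identity: A'⁻¹ * Q = Zr θ * A⁻¹
  have hkey : A'⁻¹ * Q = Zr θ * A⁻¹ := by
    rw [← hMθ, hM_def]
    rw [Matrix.mul_assoc, Matrix.mul_assoc, hAinv, Matrix.mul_one]
  refine congrArg (fun s => 1 / (N : ℝ) * s) (Finset.sum_congr rfl fun i _ => ?_)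
  rw [Matrix.mulVec_mulVec, hkey, ← Matrix.mulVec_mulVec, hψ]
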